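/- arXiv:1311.4748 — 5 statements merged into one kernel-verified Lean document; each statement's English description precedes it below -/
import Mathlib

section
/- For every d ≥ 1 and every N ≥ d, the set of full spark frames in 𝓕_{N,d}^ℂ is generic in 𝓕_{N,d}^ℂ: it contains a subset that is both open and dense in 𝓕_{N,d}^ℂ with the subspace topology induced from the space of d×N complex matrices. -/
noncomputable section

/-- The set of finite unit norm tight frames (FUNTFs) of `N` vectors in `𝕜^d`,
viewed as `d × N` matrices `F` with unit-norm columns and `F * Fᴴ = (N/d) • 1`. -/
def FUNTF (𝕜 : Type*) [RCLike 𝕜] (N d : ℕ) : Set (Matrix (Fin d) (Fin N) 𝕜) :=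
  {F | F * F.conjTranspose = ((N : 𝕜) / (d : 𝕜)) • 1 ∧
       ∀ n, (F.conjTranspose * F) n n = 1}

/-- A `d × N` matrix is full spark if every `d` of its columns are linearly independent. -/
def FullSpark {𝕜 : Type*} [RCLike 𝕜] {m n : ℕ} (F : Matrix (Fin m) (Fin n) 𝕜) : Prop :=
  ∀ s : Finset (Fin n), s.card = m →
    LinearIndependent 𝕜 (fun j : s => (fun i => F i (j : Fin n)))

namespace FSproof
open Submodule Set Complex Finset

variable {N d : ℕ}

/-- The `j`-th column of `F`. -/
def col (F : Matrix (Fin d) (Fin N) ℂ) (j : Fin N) : Fin d → ℂ := fun i => F i j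

/-- Linear independence of the columns indexed by `J`. -/
def LI (F : Matrix (Fin d) (Fin N) ℂ) (J : Set (Fin N)) : Prop :=
  LinearIndependent ℂ (fun j : J => col F j)

lemma LI.mono {F : Matrix (Fin d) (Fin N) ℂ} {J J' : Set (Fin N)} (h : LI F J) (hs : J' ⊆ J) :
    LI F J' := h.comp (Set.inclusion hs) (Set.inclusion_injective hs)

lemma li_insert_iff {F : Matrix (Fin d) (Fin N) ℂ} {J : Set (Fin N)} {m : Fin N} (hm : m ∉ J) :
    LI F (insert m J) ↔ LI F J ∧ col F m ∉ span ℂ (col F '' J) :=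
  linearIndepOn_insert hm

lemma LI_empty (F : Matrix (Fin d) (Fin N) ℂ) : LI F (∅ : Set (Fin N)) :=
  linearIndependent_empty_type

lemma fullSpark_iff (F : Matrix (Fin d) (Fin N) ℂ) :
    FullSpark F ↔ ∀ s : Finset (Fin N), s.card = d → LI F ↑s :=
  Iff.rfl

/- columns span everything -/
lemma mulVec_mem_span (F : Matrix (Fin d) (Fin N) ℂ) (z : Fin N → ℂ) :
    F.mulVec z ∈ span ℂ (Set.range (col F)) := by
  have : F.mulVec z = ∑ j : Fin N, z j • col F j := by
    funext i
    simp [Matrix.mulVec, dotProduct, col, mul_comm]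
  rw [this]
  exact Submodule.sum_mem _ fun j _ => Submodule.smul_mem _ _ (Submodule.subset_span ⟨j, rfl⟩)

lemma span_cols_top {F : Matrix (Fin d) (Fin N) ℂ} (hd : 1 ≤ d) (hN : d ≤ N)
    (hF : F * F.conjTranspose = ((N : ℂ) / (d : ℂ)) • 1) (y : Fin d → ℂ) :
    y ∈ span ℂ (Set.range (col F)) := by
  have hr : ((N : ℂ) / (d : ℂ)) ≠ 0 := by
    have hN0 : (N : ℂ) ≠ 0 := Nat.cast_ne_zero.2 (by omega)
    have hd0 : (d : ℂ) ≠ 0 := Nat.cast_ne_zero.2 (by omega)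
    exact div_ne_zero hN0 hd0
  have : y = F.mulVec (((N : ℂ) / (d : ℂ))⁻¹ • (F.conjTranspose.mulVec y)) := by
    rw [Matrix.mulVec_smul, Matrix.mulVec_mulVec, hF]
    funext i
    simp only [Matrix.smul_mulVec, Matrix.one_mulVec, Pi.smul_apply, smul_smul,
      smul_eq_mul]
    rw [← mul_assoc, inv_mul_cancel₀ hr, one_mul]
  rw [this]
  exact mulVec_mem_span _ _

/- openness of independence -/
lemma continuous_cols (J : Set (Fin N)) :
    Continuous fun (F : Matrix (Fin d) (Fin N) ℂ) => (fun j : J => col F j) :=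
  continuous_pi fun j => continuous_pi fun i =>
    (continuous_apply (j : Fin N)).comp (continuous_apply i)

lemma isOpen_LI (J : Set (Fin N)) :
    IsOpen {F : Matrix (Fin d) (Fin N) ℂ | LI F J} :=
  isOpen_setOf_linearIndependent.preimage (continuous_cols J)


def mov (F : Matrix (Fin d) (Fin N) ℂ) (m n : Fin N) (u : ℂ) (θ : ℝ) :
    Matrix (Fin d) (Fin N) ℂ := fun i j =>
  if j = m then (Real.cos θ : ℂ) * F i m + (Complex.I * (Real.sin θ : ℂ) * (starRingEnd ℂ) u) * F i n
  else if j = n then (Complex.I * (Real.sin θ : ℂ) * u) * F i m + (Real.cos θ : ℂ) * F i n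
  else F i j

lemma mov_zero (F : Matrix (Fin d) (Fin N) ℂ) (m n : Fin N) (u : ℂ) :
    mov F m n u 0 = F := by
  funext i j
  simp only [mov, Real.cos_zero, Real.sin_zero]
  push_cast
  split_ifs with h1 h2
  · subst h1; ring
  · subst h2; ring
  · rfl

lemma continuous_mov (F : Matrix (Fin d) (Fin N) ℂ) (m n : Fin N) (u : ℂ) :
    Continuous fun θ => mov F m n u θ := by
  apply continuous_pi; intro i; apply continuous_pi; intro j
  by_cases h1 : j = m
  · simp only [mov, h1, eq_self_iff_true, if_true]; fun_prop
  · by_cases h2 : j = n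
    · by_cases h0 : n = m
      · exact absurd (h2.trans h0) h1
      · simp only [mov, h1, h2, h0, eq_self_iff_true, if_true, if_false, ite_false]; fun_prop
    · simp only [mov, h1, h2, if_false, ite_false]; fun_prop

lemma sum_split (m n : Fin N) (hmn : m ≠ n) (f : Fin N → ℂ) :
    ∑ j, f j = f m + (f n + ∑ j ∈ (Finset.univ.erase m).erase n, f j) := by
  rw [Finset.add_sum_erase _ f (Finset.mem_erase.2 ⟨Ne.symm hmn, Finset.mem_univ n⟩),
    Finset.add_sum_erase _ f (Finset.mem_univ m)]

lemma funtf_mov {F : Matrix (Fin d) (Fin N) ℂ} (hF : F ∈ FUNTF ℂ N d)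
    {m n : Fin N} (hmn : m ≠ n) {u : ℂ} (hu : u * (starRingEnd ℂ) u = 1)
    (hug : (starRingEnd ℂ) u * (∑ i, (starRingEnd ℂ) (F i m) * F i n)
         = u * (starRingEnd ℂ) (∑ i, (starRingEnd ℂ) (F i m) * F i n)) (θ : ℝ) :
    mov F m n u θ ∈ FUNTF ℂ N d := by
  have hcs : (Real.cos θ : ℂ) ^ 2 + (Real.sin θ : ℂ) ^ 2 = 1 := by
    exact_mod_cast Real.cos_sq_add_sin_sq θ
  set G := mov F m n u θ with hG
  have hGm : ∀ i, G i m = (Real.cos θ : ℂ) * F i m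
      + (Complex.I * (Real.sin θ : ℂ) * (starRingEnd ℂ) u) * F i n := by
    intro i; simp [hG, mov]
  have hGn : ∀ i, G i n = (Complex.I * (Real.sin θ : ℂ) * u) * F i m
      + (Real.cos θ : ℂ) * F i n := by
    intro i; simp [hG, mov, Ne.symm hmn]
  have hGo : ∀ i j, j ≠ m → j ≠ n → G i j = F i j := by
    intro i j h1 h2; simp [hG, mov, h1, h2]
  constructor
  · -- G * Gᴴ = F * Fᴴ = scalar
    have : G * G.conjTranspose = F * F.conjTranspose := by
      ext i k
      rw [Matrix.mul_apply, Matrix.mul_apply]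
      simp only [Matrix.conjTranspose_apply, Complex.star_def]
      rw [sum_split m n hmn, sum_split m n hmn]
      have tail : ∑ j ∈ (Finset.univ.erase m).erase n, G i j * (starRingEnd ℂ) (G k j)
          = ∑ j ∈ (Finset.univ.erase m).erase n, F i j * (starRingEnd ℂ) (F k j) := by
        refine Finset.sum_congr rfl fun j hj => ?_
        have h2 : j ≠ n := (Finset.mem_erase.1 hj).1
        have h1 : j ≠ m := (Finset.mem_erase.1 (Finset.mem_erase.1 hj).2).1
        rw [hGo i j h1 h2, hGo k j h1 h2]
      rw [tail, hGm, hGm, hGn, hGn]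
      simp only [map_add, map_mul, Complex.conj_ofReal, Complex.conj_I, Complex.conj_conj]
      linear_combination (F i m * (starRingEnd ℂ) (F k m) + F i n * (starRingEnd ℂ) (F k n)) * hcs
        + (Real.sin θ : ℂ)^2 * (F i m * (starRingEnd ℂ) (F k m) + F i n * (starRingEnd ℂ) (F k n)) * hu
        - (Real.sin θ : ℂ)^2 * (u * (starRingEnd ℂ) u)
          * (F i m * (starRingEnd ℂ) (F k m) + F i n * (starRingEnd ℂ) (F k n)) * Complex.I_sq
    rw [this, hF.1]
  · -- unit norm columns
    intro p
    have base : ∀ q, ((F.conjTranspose * F) q q : ℂ) = ∑ i, (starRingEnd ℂ) (F i q) * F i q := by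
      intro q; rw [Matrix.mul_apply]; simp [Matrix.conjTranspose_apply]
    have e1 : ∑ i, (starRingEnd ℂ) (F i m) * F i m = 1 := by rw [← base]; exact hF.2 m
    have e2 : ∑ i, (starRingEnd ℂ) (F i n) * F i n = 1 := by rw [← base]; exact hF.2 n
    set g := ∑ i, (starRingEnd ℂ) (F i m) * F i n with hg
    have e3 : ∑ i, (starRingEnd ℂ) (F i n) * F i m = (starRingEnd ℂ) g := by
      rw [hg, map_sum]
      exact Finset.sum_congr rfl fun i _ => by simp [mul_comm]
    have goal_eq : ((G.conjTranspose * G) p p : ℂ) = ∑ i, (starRingEnd ℂ) (G i p) * G i p := by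
      rw [Matrix.mul_apply]; simp [Matrix.conjTranspose_apply]
    rw [goal_eq]
    by_cases h1 : p = m
    · subst h1
      have key : ∀ i, (starRingEnd ℂ) (G i p) * G i p
          = (Real.cos θ:ℂ)^2 * ((starRingEnd ℂ) (F i p) * F i p)
          + ((Real.sin θ:ℂ)^2 * (u * (starRingEnd ℂ) u)) * ((starRingEnd ℂ) (F i n) * F i n)
          + ((Real.cos θ:ℂ) * (Real.sin θ:ℂ) * Complex.I * (starRingEnd ℂ) u) * ((starRingEnd ℂ) (F i p) * F i n)
          - ((Real.cos θ:ℂ) * (Real.sin θ:ℂ) * Complex.I * u) * ((starRingEnd ℂ) (F i n) * F i p) := by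
        intro i
        rw [hGm]
        simp only [map_add, map_mul, Complex.conj_ofReal, Complex.conj_I, Complex.conj_conj]
        linear_combination (-((Real.sin θ:ℂ)^2 * u * (starRingEnd ℂ) u
          * ((starRingEnd ℂ) (F i n) * F i n))) * Complex.I_sq
      rw [Finset.sum_congr rfl fun i _ => key i]
      simp only [Finset.sum_add_distrib, Finset.sum_sub_distrib, ← Finset.mul_sum]
      rw [e1, e2, ← hg, e3]
      linear_combination hcs + (Real.sin θ:ℂ)^2 * hu
        + (Real.cos θ:ℂ) * (Real.sin θ:ℂ) * Complex.I * hug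
    · by_cases h2 : p = n
      · subst h2
        have key : ∀ i, (starRingEnd ℂ) (G i p) * G i p
            = ((Real.sin θ:ℂ)^2 * (u * (starRingEnd ℂ) u)) * ((starRingEnd ℂ) (F i m) * F i m)
            + (Real.cos θ:ℂ)^2 * ((starRingEnd ℂ) (F i p) * F i p)
            - ((Real.cos θ:ℂ) * (Real.sin θ:ℂ) * Complex.I * (starRingEnd ℂ) u) * ((starRingEnd ℂ) (F i m) * F i p)
            + ((Real.cos θ:ℂ) * (Real.sin θ:ℂ) * Complex.I * u) * ((starRingEnd ℂ) (F i p) * F i m) := by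
          intro i
          rw [hGn]
          simp only [map_add, map_mul, Complex.conj_ofReal, Complex.conj_I, Complex.conj_conj]
          linear_combination (-((Real.sin θ:ℂ)^2 * u * (starRingEnd ℂ) u
            * ((starRingEnd ℂ) (F i m) * F i m))) * Complex.I_sq
        rw [Finset.sum_congr rfl fun i _ => key i]
        simp only [Finset.sum_add_distrib, Finset.sum_sub_distrib, ← Finset.mul_sum]
        rw [e1, e2, ← hg, e3]
        linear_combination hcs + (Real.sin θ:ℂ)^2 * hu
          - (Real.cos θ:ℂ) * (Real.sin θ:ℂ) * Complex.I * hug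
      · have key : ∀ i, (starRingEnd ℂ) (G i p) * G i p = (starRingEnd ℂ) (F i p) * F i p := by
          intro i; rw [hGo i p h1 h2]
        rw [Finset.sum_congr rfl fun i _ => key i, ← base]
        exact hF.2 p


lemma exists_u (g : ℂ) : ∃ u : ℂ, u * (starRingEnd ℂ) u = 1 ∧
    (starRingEnd ℂ) u * g = u * (starRingEnd ℂ) g := by
  by_cases hg : g = 0
  · exact ⟨1, by simp, by simp [hg]⟩
  · have habs : ((‖g‖ : ℝ) : ℂ) ≠ 0 :=
      Complex.ofReal_ne_zero.2 (norm_ne_zero_iff.2 hg)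
    refine ⟨g / (‖g‖ : ℝ), ?_, ?_⟩
    · rw [map_div₀, Complex.conj_ofReal]
      field_simp
      rw [Complex.mul_conj, ← Complex.sq_norm]
      push_cast
      ring
    · rw [map_div₀, Complex.conj_ofReal]
      ring

lemma li_insert_mov {F : Matrix (Fin d) (Fin N) ℂ} {m n : Fin N} (hmn : m ≠ n)
    {I : Set (Fin N)} (hmI : m ∉ I) (hnI : n ∉ I)
    (hLI : LI F I) (hm : col F m ∈ span ℂ (col F '' I)) (hn : col F n ∉ span ℂ (col F '' I))
    {u : ℂ} (hune : (starRingEnd ℂ) u ≠ 0) {θ : ℝ} (hθ : Real.sin θ ≠ 0) :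
    LI (mov F m n u θ) (insert m I) := by
  have hcols : ∀ j ∈ I, col (mov F m n u θ) j = col F j := by
    intro j hj
    have h1 : j ≠ m := fun e => hmI (e ▸ hj)
    have h2 : j ≠ n := fun e => hnI (e ▸ hj)
    funext i
    simp [col, mov, h1, h2]
  have hLI' : LI (mov F m n u θ) I := by
    have hfam : (fun j : I => col (mov F m n u θ) j) = fun j : I => col F j :=
      funext fun j => hcols j j.2
    unfold LI
    rw [hfam]
    exact hLI
  have himg : col (mov F m n u θ) '' I = col F '' I := Set.image_congr hcols
  have hc : (Complex.I * (Real.sin θ : ℂ) * (starRingEnd ℂ) u) ≠ 0 :=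
    mul_ne_zero (mul_ne_zero Complex.I_ne_zero (Complex.ofReal_ne_zero.2 hθ)) hune
  have hrep : col (mov F m n u θ) m
      = (Real.cos θ : ℂ) • col F m + (Complex.I * (Real.sin θ : ℂ) * (starRingEnd ℂ) u) • col F n := by
    funext i
    simp [col, mov]
  have hmm : col (mov F m n u θ) m ∉ span ℂ (col (mov F m n u θ) '' I) := by
    rw [himg]
    intro hmem
    apply hn
    have h1 : (Complex.I * (Real.sin θ : ℂ) * (starRingEnd ℂ) u) • col F n
        ∈ span ℂ (col F '' I) := by
      have h2 := Submodule.sub_mem _ hmem (Submodule.smul_mem _ ((Real.cos θ : ℂ)) hm)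
      rwa [hrep, add_sub_cancel_left] at h2
    exact (Submodule.smul_mem_iff _ hc).1 h1
  exact (li_insert_iff hmI).2 ⟨hLI', hmm⟩

open scoped Classical in
/-- The collection of column index sets with independent columns. -/
def indep (F : Matrix (Fin d) (Fin N) ℂ) : Finset (Finset (Fin N)) :=
  Finset.univ.filter fun J => LI F ↑J

lemma approx (hd : 1 ≤ d) (hN : d ≤ N) :
    ∀ k : ℕ, ∀ F : Matrix (Fin d) (Fin N) ℂ, F ∈ FUNTF ℂ N d →
      Fintype.card (Finset (Fin N)) ≤ (indep F).card + k →
      ∀ W ∈ nhds F, ∃ G ∈ W, G ∈ FUNTF ℂ N d ∧ FullSpark G := by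
  classical
  intro k
  induction k with
  | zero =>
    intro F hF hcount W hW
    by_cases hFS : FullSpark F
    · exact ⟨F, mem_of_mem_nhds hW, hF, hFS⟩
    exfalso
    rw [fullSpark_iff] at hFS
    push_neg at hFS
    obtain ⟨s, hs, hdep⟩ := hFS
    have h1 : indep F ⊆ Finset.univ.erase s := by
      intro J hJ
      refine Finset.mem_erase.2 ⟨?_, Finset.mem_univ J⟩
      rintro rfl
      exact hdep (Finset.mem_filter.1 hJ).2
    have h2 : (indep F).card ≤ Fintype.card (Finset (Fin N)) - 1 := by
      have := Finset.card_le_card h1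
      rwa [Finset.card_erase_of_mem (Finset.mem_univ s), Finset.card_univ] at this
    have h3 : 0 < Fintype.card (Finset (Fin N)) := Fintype.card_pos
    omega
  | succ k ih =>
    intro F hF hcount W hW
    classical
    by_cases hFS : FullSpark F
    · exact ⟨F, mem_of_mem_nhds hW, hF, hFS⟩
    rw [fullSpark_iff] at hFS
    push_neg at hFS
    obtain ⟨s, hs, hdep⟩ := hFS
    -- maximal independent subset of s
    set J : Finset (Finset (Fin N)) := s.powerset.filter (fun I => LI F ↑I) with hJdef
    have hJne : J.Nonempty :=
      ⟨∅, Finset.mem_filter.2 ⟨Finset.empty_mem_powerset s,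
        by simpa [Finset.coe_empty] using LI_empty F⟩⟩
    obtain ⟨I, hImem, hImax⟩ := J.exists_max_image Finset.card hJne
    have hIs : I ⊆ s := Finset.mem_powerset.1 (Finset.mem_filter.1 hImem).1
    have hILI : LI F ↑I := (Finset.mem_filter.1 hImem).2
    have hne : I ≠ s := by rintro rfl; exact hdep hILI
    have hss : I ⊂ s := Finset.ssubset_iff_subset_ne.2 ⟨hIs, hne⟩
    obtain ⟨m, hms, hmI⟩ := Finset.exists_of_ssubset hss
    have hmI' : m ∉ (↑I : Set (Fin N)) := by simpa using hmI
    have hm_span : col F m ∈ span ℂ (col F '' ↑I) := by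
      by_contra h
      have hmem : insert m I ∈ J := by
        refine Finset.mem_filter.2 ⟨Finset.mem_powerset.2 (Finset.insert_subset hms hIs), ?_⟩
        rw [Finset.coe_insert]
        exact (li_insert_iff hmI').2 ⟨hILI, h⟩
      have := hImax _ hmem
      rw [Finset.card_insert_of_notMem hmI] at this
      omega
    have hn_ex : ∃ n, col F n ∉ span ℂ (col F '' ↑I) := by
      by_contra h
      push_neg at h
      have htop : ∀ y : Fin d → ℂ, y ∈ span ℂ (col F '' ↑I) := by
        intro y
        have hy := span_cols_top hd hN hF.1 y
        have hle : span ℂ (Set.range (col F)) ≤ span ℂ (col F '' ↑I) :=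
          span_le.2 (by rintro _ ⟨j, rfl⟩; exact h j)
        exact hle hy
      have h6 : span ℂ (col F '' ↑I) = ⊤ := eq_top_iff.2 fun y _ => htop y
      have h2 : col F '' ↑I = ↑(I.image (col F)) := (Finset.coe_image).symm
      have h3 : Module.finrank ℂ (span ℂ ((↑(I.image (col F)) : Set (Fin d → ℂ)))) ≤
          (I.image (col F)).card := finrank_span_finset_le_card (I.image (col F))
      rw [← h2, h6] at h3
      rw [finrank_top, Module.finrank_fin_fun] at h3
      have h4 : (I.image (col F)).card ≤ I.card := Finset.card_image_le
      have h5 : I.card < d := hs ▸ Finset.card_lt_card hss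
      omega
    obtain ⟨n, hn⟩ := hn_ex
    have hnI : n ∉ (↑I : Set (Fin N)) := fun hmem =>
      hn (Submodule.subset_span (Set.mem_image_of_mem _ hmem))
    have hnm : n ≠ m := by rintro rfl; exact hn hm_span
    obtain ⟨u, hu, hug⟩ := exists_u (∑ i, (starRingEnd ℂ) (F i m) * F i n)
    have hune : (starRingEnd ℂ) u ≠ 0 := by
      intro h
      rw [h, mul_zero] at hu
      exact zero_ne_one hu
    -- find a suitable small angle
    obtain ⟨V, hVW, hVopen, hFV⟩ := mem_nhds_iff.1 hW
    have hΩopen : IsOpen (((fun θ => mov F m n u θ) ⁻¹' V) ∩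
        ⋂ J' ∈ indep F, {θ : ℝ | LI (mov F m n u θ) ↑J'}) := by
      refine IsOpen.inter (hVopen.preimage (continuous_mov F m n u)) ?_
      refine isOpen_biInter_finset fun J' _ => ?_
      exact (isOpen_LI (↑J' : Set (Fin N))).preimage (continuous_mov F m n u)
    have hΩ0 : (0:ℝ) ∈ ((fun θ => mov F m n u θ) ⁻¹' V) ∩
        ⋂ J' ∈ indep F, {θ : ℝ | LI (mov F m n u θ) ↑J'} := by
      constructor
      · simp only [Set.mem_preimage, mov_zero]; exact hFV
      · refine Set.mem_iInter₂.2 fun J' hJ' => ?_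
        simp only [Set.mem_setOf_eq, mov_zero]
        exact (Finset.mem_filter.1 hJ').2
    obtain ⟨δ, hδpos, hball⟩ := Metric.isOpen_iff.1 hΩopen 0 hΩ0
    set θ := min (δ/2) 1 with hθdef
    have hθpos : 0 < θ := lt_min (by linarith) one_pos
    have hθδ : θ < δ := lt_of_le_of_lt (min_le_left _ _) (by linarith)
    have hθmem := hball (by
      rw [Metric.mem_ball, Real.dist_eq, sub_zero, abs_of_pos hθpos]
      exact hθδ)
    have hsin : Real.sin θ ≠ 0 := by
      refine ne_of_gt (Real.sin_pos_of_pos_of_lt_pi hθpos ?_)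
      have := Real.pi_gt_three
      have h1 : θ ≤ 1 := min_le_right _ _
      linarith
    set G := mov F m n u θ with hGdef
    have hGF : G ∈ FUNTF ℂ N d := funtf_mov hF (Ne.symm hnm) hu hug θ
    have hGV : G ∈ V := hθmem.1
    -- progress
    have hins : LI G ↑(insert m I) := by
      rw [Finset.coe_insert]
      exact li_insert_mov (Ne.symm hnm) hmI' hnI hILI hm_span hn hune hsin
    have hnotins : ¬ LI F ↑(insert m I) := by
      rw [Finset.coe_insert]
      intro hLIins
      exact ((li_insert_iff hmI').1 hLIins).2 hm_span
    have hsub : indep F ⊆ indep G := by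
      intro J' hJ'
      refine Finset.mem_filter.2 ⟨Finset.mem_univ _, ?_⟩
      exact Set.mem_iInter₂.1 hθmem.2 J' hJ'
    have hstrict : indep F ⊂ indep G := by
      refine (Finset.ssubset_iff_of_subset hsub).2 ⟨insert m I, ?_, ?_⟩
      · exact Finset.mem_filter.2 ⟨Finset.mem_univ _, hins⟩
      · intro hbad
        exact hnotins (Finset.mem_filter.1 hbad).2
    have hcard : (indep F).card < (indep G).card := Finset.card_lt_card hstrict
    obtain ⟨G', hG'V, hG'F, hG'FS⟩ := ih G hGF (by omega) V (hVopen.mem_nhds hGV)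
    exact ⟨G', hVW hG'V, hG'F, hG'FS⟩

lemma isOpen_fullSpark : IsOpen {F : Matrix (Fin d) (Fin N) ℂ | FullSpark F} := by
  classical
  have h : {F : Matrix (Fin d) (Fin N) ℂ | FullSpark F} =
      ⋂ s ∈ Finset.univ.filter (fun s : Finset (Fin N) => s.card = d), {F | LI F ↑s} := by
    ext F
    simp only [Set.mem_setOf_eq, Set.mem_iInter, Finset.mem_filter, Finset.mem_univ, true_and]
    exact ⟨fun hh s hs => hh s hs, fun hh s hs => hh s hs⟩
  rw [h]
  exact isOpen_biInter_finset fun s _ => isOpen_LI (↑s : Set (Fin N))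

end FSproof

/-- For every `d ≥ 1` and `N ≥ d`, the full spark frames are generic in `𝓕_{N,d}^ℂ`:
they contain a subset that is open and dense in the subspace topology. -/
theorem fullSpark_generic_complex (N d : ℕ) (hd : 1 ≤ d) (hN : d ≤ N) :
    ∃ U : Set (FUNTF ℂ N d), IsOpen U ∧ Dense U ∧ ∀ F ∈ U, FullSpark (F : Matrix (Fin d) (Fin N) ℂ) := by
  refine ⟨Subtype.val ⁻¹' {F | FullSpark F}, ?_, ?_, fun F hF => hF⟩
  · exact FSproof.isOpen_fullSpark.preimage continuous_subtype_val
  · rw [dense_iff_inter_open]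
    rintro t ht ⟨x, hxt⟩
    obtain ⟨O, hO, rfl⟩ := isOpen_induced_iff.1 ht
    have hxO : (x : Matrix (Fin d) (Fin N) ℂ) ∈ O := hxt
    obtain ⟨G, hGO, hGF, hGFS⟩ := FSproof.approx hd hN (Fintype.card (Finset (Fin N)))
      x.1 x.2 (Nat.le_add_left _ _) O (hO.mem_nhds hxO)
    exact ⟨⟨G, hGF⟩, hGO, hGFS⟩
end
end

section
/- Let 𝔽 = ℝ or ℂ, let 1 ≤ d < N, let F = (f_1, …, f_N) be a Parseval frame in 𝔽^d, and let G = (g_1, …, g_N) be a Naimark complement of F in 𝔽^{N−d}. Then F is orthodecomposable if and only if G is orthodecomposable. -/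
noncomputable section

/-- The `j`-th column of a matrix, as a vector in Euclidean space. -/
def col {𝕜 : Type*} [RCLike 𝕜] {m n : ℕ} (F : Matrix (Fin m) (Fin n) 𝕜) (j : Fin n) :
    EuclideanSpace 𝕜 (Fin m) :=
  (WithLp.equiv 2 (Fin m → 𝕜)).symm fun i => F i j

/-- A family of vectors is orthodecomposable (OD) if the index set admits a partition into
two nonempty sets `S`, `T` such that the span of the vectors indexed by `S` is the orthogonal
complement of the span of the vectors indexed by `T`. -/
def Orthodecomposable (𝕜 : Type*) [RCLike 𝕜] {E : Type*} [NormedAddCommGroup E]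
    [InnerProductSpace 𝕜 E] {ι : Type*} (f : ι → E) : Prop :=
  ∃ S T : Set ι, S.Nonempty ∧ T.Nonempty ∧ Disjoint S T ∧ S ∪ T = Set.univ ∧
    Submodule.span 𝕜 (f '' S) = (Submodule.span 𝕜 (f '' T))ᗮ


open scoped InnerProductSpace

lemma col_inner {𝕜 : Type*} [RCLike 𝕜] {m n : ℕ} (M : Matrix (Fin m) (Fin n) 𝕜)
    (s t : Fin n) : ⟪col M s, col M t⟫_𝕜 = (M.conjTranspose * M) s t := by
  simp [col, PiLp.inner_apply, Matrix.mul_apply, Matrix.conjTranspose_apply,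
    RCLike.inner_apply, mul_comm]

lemma col_span_top {𝕜 : Type*} [RCLike 𝕜] {m n : ℕ} (M : Matrix (Fin m) (Fin n) 𝕜)
    (hM : M * M.conjTranspose = 1) :
    Submodule.span 𝕜 (Set.range (col M)) = ⊤ := by
  rw [eq_top_iff]
  intro x _
  set c : Fin n → 𝕜 := M.conjTranspose.mulVec (fun i => x i) with hc
  have hx : x = ∑ j : Fin n, c j • col M j := by
    ext i
    have h1 : (∑ j : Fin n, c j • col M j) i = ∑ j : Fin n, c j * M i j := by
      rw [WithLp.ofLp_sum, Finset.sum_apply i Finset.univ]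
      simp [col]
    rw [h1]
    have h2 : ∑ j : Fin n, c j * M i j = (M * M.conjTranspose).mulVec (fun i => x i) i := by
      rw [← Matrix.mulVec_mulVec, hc]
      simp [Matrix.mulVec, dotProduct, mul_comm]
    rw [h2, hM]
    simp [Matrix.mulVec, dotProduct, Matrix.one_apply, Finset.sum_ite_eq]
  rw [hx]
  exact Submodule.sum_mem _ fun j _ =>
    Submodule.smul_mem _ _ (Submodule.subset_span ⟨j, rfl⟩)

lemma ortho_span_iff {𝕜 : Type*} [RCLike 𝕜] {E : Type*} [NormedAddCommGroup E]
    [InnerProductSpace 𝕜 E] {ι : Type*} {f : ι → E}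
    (hspan : Submodule.span 𝕜 (Set.range f) = ⊤) {S T : Set ι}
    (hST : S ∪ T = Set.univ) :
    Submodule.span 𝕜 (f '' S) = (Submodule.span 𝕜 (f '' T))ᗮ ↔
      ∀ s ∈ S, ∀ t ∈ T, ⟪f s, f t⟫_𝕜 = 0 := by
  constructor
  · intro h s hs t ht
    have hsS : f s ∈ (Submodule.span 𝕜 (f '' T))ᗮ := by
      rw [← h]; exact Submodule.subset_span ⟨s, hs, rfl⟩
    have htT : f t ∈ Submodule.span 𝕜 (f '' T) := Submodule.subset_span ⟨t, ht, rfl⟩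
    exact inner_eq_zero_symm.mpr
      ((Submodule.mem_orthogonal _ _).mp hsS _ htT)
  · intro h
    have hle : Submodule.span 𝕜 (f '' S) ≤ (Submodule.span 𝕜 (f '' T))ᗮ := by
      rw [Submodule.span_le]
      rintro _ ⟨s, hs, rfl⟩
      rw [SetLike.mem_coe, Submodule.mem_orthogonal]
      intro u hu
      induction hu using Submodule.span_induction with
      | mem x hx =>
        obtain ⟨t, ht, rfl⟩ := hx
        exact inner_eq_zero_symm.mpr (h s hs t ht)
      | zero => simp
      | add x y hx hy ihx ihy => rw [inner_add_left, ihx, ihy, add_zero]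
      | smul a x hx ihx => rw [inner_smul_left, ihx, mul_zero]
    refine le_antisymm hle ?_
    intro x hx
    have hsup : Submodule.span 𝕜 (f '' S) ⊔ Submodule.span 𝕜 (f '' T) = ⊤ := by
      rw [← Submodule.span_union, ← Set.image_union, hST, Set.image_univ, hspan]
    have hxmem : x ∈ Submodule.span 𝕜 (f '' S) ⊔ Submodule.span 𝕜 (f '' T) := by
      rw [hsup]; trivial
    obtain ⟨a, ha, b, hb, hab⟩ := Submodule.mem_sup.mp hxmem
    have hbx : ⟪b, x⟫_𝕜 = 0 := (Submodule.mem_orthogonal _ _).mp hx _ hb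
    have hba : ⟪b, a⟫_𝕜 = 0 := (Submodule.mem_orthogonal _ _).mp (hle ha) _ hb
    have hb0 : b = 0 := by
      have : ⟪b, b⟫_𝕜 = 0 := by
        have h4 : ⟪b, a + b⟫_𝕜 = 0 := hab ▸ hbx
        rw [inner_add_right, hba, zero_add] at h4
        exact h4
      exact inner_self_eq_zero.mp this
    rw [← hab, hb0, add_zero]
    exact ha

/-- A Parseval frame is orthodecomposable if and only if its Naimark complement is. -/
theorem naimark_orthodecomposable (𝕜 : Type*) [RCLike 𝕜] (N d : ℕ) (hd : 1 ≤ d) (hdN : d < N)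
    (F : Matrix (Fin d) (Fin N) 𝕜) (G : Matrix (Fin (N - d)) (Fin N) 𝕜)
    (hF : F * F.conjTranspose = 1) (hG : G * G.conjTranspose = 1)
    (hFG : F.conjTranspose * F + G.conjTranspose * G = 1) :
    Orthodecomposable 𝕜 (col F) ↔ Orthodecomposable 𝕜 (col G) := by
  have hsF := col_span_top F hF
  have hsG := col_span_top G hG
  have key : ∀ (S T : Set (Fin N)), Disjoint S T → S ∪ T = Set.univ →
      ((∀ s ∈ S, ∀ t ∈ T, ⟪col F s, col F t⟫_𝕜 = 0) ↔
       (∀ s ∈ S, ∀ t ∈ T, ⟪col G s, col G t⟫_𝕜 = 0)) := by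
    intro S T hdisj hun
    have hne : ∀ s ∈ S, ∀ t ∈ T, s ≠ t := by
      intro s hs t ht he
      exact Set.disjoint_left.mp hdisj hs (he ▸ ht)
    have hkey : ∀ s ∈ S, ∀ t ∈ T,
        (F.conjTranspose * F) s t = -(G.conjTranspose * G) s t := by
      intro s hs t ht
      have h1 : (F.conjTranspose * F + G.conjTranspose * G) s t = 0 := by
        rw [hFG]; exact Matrix.one_apply_ne (hne s hs t ht)
      have := h1
      rw [Matrix.add_apply] at this
      exact eq_neg_of_add_eq_zero_left this
    constructor <;> intro h s hs t ht
    · rw [col_inner]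
      have h2 := h s hs t ht
      rw [col_inner] at h2
      have h3 := hkey s hs t ht
      rw [h2] at h3
      rw [← neg_eq_zero, ← h3]
    · rw [col_inner]
      have h2 := h s hs t ht
      rw [col_inner] at h2
      rw [hkey s hs t ht, h2, neg_zero]
  constructor
  · rintro ⟨S, T, hS, hT, hdisj, hun, hspan⟩
    refine ⟨S, T, hS, hT, hdisj, hun, ?_⟩
    rw [ortho_span_iff hsG hun]
    exact (key S T hdisj hun).mp ((ortho_span_iff hsF hun).mp hspan)
  · rintro ⟨S, T, hS, hT, hdisj, hun, hspan⟩
    refine ⟨S, T, hS, hT, hdisj, hun, ?_⟩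
    rw [ortho_span_iff hsF hun]
    exact (key S T hdisj hun).mpr ((ortho_span_iff hsG hun).mp hspan)
end
end

section
/- Let 𝔽 = ℝ or ℂ, let 1 ≤ d < N, let F = (f_1, …, f_N) be a Parseval frame in 𝔽^d, and let G = (g_1, …, g_N) be a Naimark complement of F in 𝔽^{N−d}. Then F is full spark (every d of the vectors f_1, …, f_N are linearly independent) if and only if G is full spark (every N−d of the vectors g_1, …, g_N are linearly independent). -/
noncomputable section

lemma naimark_fullSpark_aux {𝕜 : Type*} [RCLike 𝕜] {N d e : ℕ} (hde : d + e = N)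
    (F : Matrix (Fin d) (Fin N) 𝕜) (G : Matrix (Fin e) (Fin N) 𝕜)
    (hFG : F.conjTranspose * F + G.conjTranspose * G = 1)
    (hFS : FullSpark F) : FullSpark G := by
  intro t ht
  by_contra hdep
  rw [Fintype.not_linearIndependent_iff] at hdep
  obtain ⟨g, hsum, i0, hi0⟩ := hdep
  -- extend coefficients by zero
  set c : Fin N → 𝕜 := fun j => if h : j ∈ t then g ⟨j, h⟩ else 0 with hc
  have hct : ∀ j ∉ t, c j = 0 := by
    intro j hj; simp [hc, hj]
  have hGc : G.mulVec c = 0 := by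
    funext i
    have h1 : ∑ j : t, g j * G i (j : Fin N) = 0 := by
      have := congrFun hsum i
      simpa [Finset.sum_apply] using this
    have h2 : (G.mulVec c) i = ∑ j : t, G i (j : Fin N) * c (j : Fin N) := by
      rw [Matrix.mulVec, dotProduct]
      rw [← Finset.sum_subset (Finset.subset_univ t)
        (fun j _ hj => by rw [hct j hj, mul_zero])]
      exact (Finset.sum_attach t fun j => G i j * c j).symm
    rw [h2]
    calc ∑ j : t, G i (j : Fin N) * c (j : Fin N)
        = ∑ j : t, g j * G i (j : Fin N) := by
          refine Finset.sum_congr rfl fun j _ => ?_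
          rw [hc]; simp [j.2, mul_comm]
      _ = 0 := h1
  have hcne : c ≠ 0 := by
    intro h
    apply hi0
    have := congrFun h i0
    simpa [hc, i0.2] using this
  -- the complementary index set
  set s : Finset (Fin N) := tᶜ with hs
  have hscard : s.card = d := by
    rw [hs, Finset.card_compl, ht, Fintype.card_fin]
    omega
  have hind := hFS s hscard
  -- x := F c; then Fᴴ x = c
  set x : Fin d → 𝕜 := F.mulVec c with hx
  have hFx : F.conjTranspose.mulVec x = c := by
    rw [hx, Matrix.mulVec_mulVec]
    have h1 : F.conjTranspose * F = 1 - G.conjTranspose * G :=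
      eq_sub_of_add_eq hFG
    rw [h1, Matrix.sub_mulVec, Matrix.one_mulVec, ← Matrix.mulVec_mulVec, hGc,
      Matrix.mulVec_zero, sub_zero]
  -- the functional v ↦ ∑ star (x i) * v i vanishes on columns of F over s
  let φ : (Fin d → 𝕜) →ₗ[𝕜] 𝕜 :=
    { toFun := fun v => ∑ i, star (x i) * v i
      map_add' := fun u v => by simp [mul_add, Finset.sum_add_distrib]
      map_smul' := fun a v => by
        simp only [smul_eq_mul, RingHom.id_apply, Finset.mul_sum]
        exact Finset.sum_congr rfl fun i _ => by rw [Pi.smul_apply, smul_eq_mul]; ring }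
  have hφcol : ∀ j : s, φ (fun i => F i (j : Fin N)) = 0 := by
    intro j
    have hj : (j : Fin N) ∉ t := Finset.mem_compl.mp j.2
    have h1 : (F.conjTranspose.mulVec x) (j : Fin N) = 0 := by
      rw [hFx]; exact hct _ hj
    have h2 : φ (fun i => F i (j : Fin N)) = star ((F.conjTranspose.mulVec x) (j : Fin N)) := by
      simp only [φ, LinearMap.coe_mk, AddHom.coe_mk, Matrix.mulVec, dotProduct,
        Matrix.conjTranspose_apply, star_sum, star_mul, star_star]
      try first
      | rfl
      | exact Finset.sum_congr rfl fun i _ => mul_comm _ _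
    rw [h2, h1, star_zero]
  -- columns of F over s span everything
  have hspan : Submodule.span 𝕜 (Set.range fun j : s => (fun i => F i (j : Fin N))) = ⊤ := by
    apply hind.span_eq_top_of_card_eq_finrank'
    rw [Fintype.card_coe, hscard]
    simp [Module.finrank_fintype_fun_eq_card]
  have hφzero : φ = 0 := by
    apply LinearMap.ext
    intro v
    have hv : v ∈ Submodule.span 𝕜 (Set.range fun j : s => (fun i => F i (j : Fin N))) := by
      rw [hspan]; trivial
    refine Submodule.span_induction ?_ ?_ ?_ ?_ hv
    · rintro w ⟨j, rfl⟩; exact hφcol j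
    · simp
    · intro u w _ _ hu hw; simp [map_add, hu, hw]
    · intro a w _ hw; simp [map_smul, hw]
  have hxzero : x = 0 := by
    funext i
    have := congrFun (congrArg DFunLike.coe hφzero) (Pi.single i 1)
    simp only [φ, LinearMap.coe_mk, AddHom.coe_mk, LinearMap.zero_apply] at this
    have h1 : star (x i) = 0 := by
      rw [Finset.sum_eq_single i (fun b _ hb => by simp [Pi.single_apply, hb]) (by simp)] at this
      simpa using this
    simpa using congrArg star h1
  apply hcne
  rw [← hFx, hxzero, Matrix.mulVec_zero]

/-- A Parseval frame is full spark if and only if its Naimark complement is full spark. -/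
theorem naimark_fullSpark (𝕜 : Type*) [RCLike 𝕜] (N d : ℕ) (hd : 1 ≤ d) (hdN : d < N)
    (F : Matrix (Fin d) (Fin N) 𝕜) (G : Matrix (Fin (N - d)) (Fin N) 𝕜)
    (hF : F * F.conjTranspose = 1) (hG : G * G.conjTranspose = 1)
    (hFG : F.conjTranspose * F + G.conjTranspose * G = 1) :
    FullSpark F ↔ FullSpark G := by
  have hde : d + (N - d) = N := by omega
  have hed : (N - d) + d = N := by omega
  constructor
  · exact naimark_fullSpark_aux hde F G hFG
  · exact naimark_fullSpark_aux hed G F (by rw [add_comm]; exact hFG)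
end
end

section
/- Let 𝔽 = ℝ or ℂ and suppose F = (f_1, …, f_N) ∈ 𝓕_{N,d}^𝔽 is non-orthodecomposable. Then there exists a permutation σ of {1, …, N} such that (f_{σ(1)}, …, f_{σ(d)}) is a basis of 𝔽^d that is non-orthodecomposable. -/
noncomputable section

open Submodule Module

section Aux

variable {𝕜 : Type*} [RCLike 𝕜]

/-- Connectivity of the correlation graph of a family of vectors on a finite index set:
every nontrivial partition of `s` admits a cross pair with nonzero inner product. -/
def Conn {E : Type*} [NormedAddCommGroup E] [InnerProductSpace 𝕜 E]
    {ι : Type*} [DecidableEq ι] (f : ι → E) (s : Finset ι) : Prop :=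
  ∀ S T : Finset ι, S ⊆ s → T ⊆ s → S.Nonempty → T.Nonempty → Disjoint S T → S ∪ T = s →
    ∃ a ∈ S, ∃ b ∈ T, (inner 𝕜 (f a) (f b) : 𝕜) ≠ 0

lemma mem_orth_span {E : Type*} [NormedAddCommGroup E] [InnerProductSpace 𝕜 E]
    {S : Set E} {x : E} (h : ∀ v ∈ S, (inner 𝕜 v x : 𝕜) = 0) :
    x ∈ (span 𝕜 S)ᗮ := by
  rw [Submodule.mem_orthogonal]
  intro u hu
  induction hu using Submodule.span_induction with
  | mem v hv => exact h v hv
  | zero => simp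
  | add u v _ _ h1 h2 => rw [inner_add_left, h1, h2, add_zero]
  | smul c u _ h1 => rw [inner_smul_left, h1, mul_zero]

lemma exists_extend {N d : ℕ} (f : Fin N → EuclideanSpace 𝕜 (Fin d))
    (hspan : span 𝕜 (Set.range f) = ⊤)
    (hNOD : ¬ Orthodecomposable 𝕜 f) :
    ∀ k (s : Finset (Fin N)), s.Nonempty →
      LinearIndependent 𝕜 (fun x : (f '' (s : Set (Fin N))) => (x : EuclideanSpace 𝕜 (Fin d))) →
      Set.InjOn f (s : Set (Fin N)) → Conn (𝕜 := 𝕜) f s → s.card + k = d →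
      ∃ t : Finset (Fin N), t.card = d ∧
        LinearIndependent 𝕜 (fun x : (f '' (t : Set (Fin N))) => (x : EuclideanSpace 𝕜 (Fin d))) ∧
        Set.InjOn f (t : Set (Fin N)) ∧ Conn (𝕜 := 𝕜) f t := by
  classical
  intro k
  induction k with
  | zero =>
    intro s _ hLI hinj hconn hcard
    exact ⟨s, by omega, hLI, hinj, hconn⟩
  | succ k ih =>
    intro s hne hLI hinj hconn hcard
    set W := span 𝕜 (f '' (s : Set (Fin N))) with hW
    have hWle : finrank 𝕜 W ≤ s.card := by
      have h1 := finrank_span_finset_le_card (R := 𝕜) (s.image f)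
      have h3 : ((s.image f : Finset _) : Set _) = f '' ↑s := Finset.coe_image
      rw [h3] at h1
      exact le_trans h1 Finset.card_image_le
    have htop : finrank 𝕜 (⊤ : Submodule 𝕜 (EuclideanSpace 𝕜 (Fin d))) = d := by
      rw [finrank_top]; exact finrank_euclideanSpace_fin
    have hWne : W ≠ ⊤ := by
      intro hWt
      rw [hWt, htop] at hWle
      omega
    have key : ∃ n, f n ∉ W ∧ ∃ b ∈ s, (inner 𝕜 (f b) (f n) : 𝕜) ≠ 0 := by
      by_contra hcon
      push_neg at hcon
      apply hNOD
      refine ⟨{n | f n ∈ W}, {n | f n ∈ W}ᶜ, ?_, ?_, disjoint_compl_right,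
        Set.union_compl_self _, ?_⟩
      · obtain ⟨b, hb⟩ := hne
        exact ⟨b, subset_span (Set.mem_image_of_mem f hb)⟩
      · by_contra hT
        rw [Set.not_nonempty_iff_eq_empty, Set.compl_empty_iff] at hT
        apply hWne
        rw [eq_top_iff, ← hspan, span_le]
        rintro _ ⟨n, rfl⟩
        have : n ∈ {n | f n ∈ W} := hT ▸ Set.mem_univ n
        exact this
      · have hV1 : span 𝕜 (f '' {n | f n ∈ W}) ≤ W :=
          span_le.mpr (by rintro _ ⟨n, hn, rfl⟩; exact hn)
        have hV2 : span 𝕜 (f '' {n | f n ∈ W}ᶜ) ≤ Wᗮ := by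
          refine span_le.mpr ?_
          rintro _ ⟨n, hn, rfl⟩
          refine mem_orth_span ?_
          rintro _ ⟨b, hb, rfl⟩
          exact hcon n hn b hb
        have hsup : span 𝕜 (f '' {n | f n ∈ W}) ⊔ span 𝕜 (f '' {n | f n ∈ W}ᶜ) = ⊤ := by
          rw [← span_union, ← Set.image_union, Set.union_compl_self, Set.image_univ, hspan]
        have hr1 : finrank 𝕜 (span 𝕜 (f '' {n | f n ∈ W})) ≤ finrank 𝕜 W :=
          Submodule.finrank_mono hV1
        have hr2 : finrank 𝕜 (span 𝕜 (f '' {n | f n ∈ W}ᶜ)) ≤ finrank 𝕜 Wᗮ :=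
          Submodule.finrank_mono hV2
        have hsum : finrank 𝕜 W + finrank 𝕜 Wᗮ = d := by
          rw [Submodule.finrank_add_finrank_orthogonal]
          exact finrank_euclideanSpace_fin
        have hkey := Submodule.finrank_sup_add_finrank_inf_eq
          (span 𝕜 (f '' {n | f n ∈ W})) (span 𝕜 (f '' {n | f n ∈ W}ᶜ))
        rw [hsup, htop] at hkey
        have e1 : finrank 𝕜 W ≤ finrank 𝕜 (span 𝕜 (f '' {n | f n ∈ W})) := by omega
        have e2 : finrank 𝕜 Wᗮ ≤ finrank 𝕜 (span 𝕜 (f '' {n | f n ∈ W}ᶜ)) := by omega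
        have hV1e : span 𝕜 (f '' {n | f n ∈ W}) = W :=
          Submodule.eq_of_le_of_finrank_le hV1 e1
        have hV2e : span 𝕜 (f '' {n | f n ∈ W}ᶜ) = Wᗮ :=
          Submodule.eq_of_le_of_finrank_le hV2 e2
        rw [hV1e, hV2e, Submodule.orthogonal_orthogonal]
    obtain ⟨n, hnW, b, hbs, hbn⟩ := key
    have hns : n ∉ s := fun hns => hnW (subset_span (Set.mem_image_of_mem f hns))
    have himg : f '' ((insert n s : Finset _) : Set _) = insert (f n) (f '' ↑s) := by
      rw [Finset.coe_insert, Set.image_insert_eq]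
    have hLI' : LinearIndependent 𝕜
        (fun x : (f '' ((insert n s : Finset _) : Set _)) => (x : EuclideanSpace 𝕜 (Fin d))) := by
      rw [himg]
      exact LinearIndepOn.id_insert hLI hnW
    have hinj' : Set.InjOn f ((insert n s : Finset _) : Set _) := by
      rw [Finset.coe_insert]
      intro a ha c hc hac
      simp only [Set.mem_insert_iff] at ha hc
      rcases ha with ha | ha <;> rcases hc with hc | hc
      · rw [ha, hc]
      · exact absurd (show f n ∈ W from subset_span ⟨c, hc, hac.symm.trans (congrArg f ha)⟩) hnW
      · exact absurd (show f n ∈ W from subset_span ⟨a, ha, hac.trans (congrArg f hc)⟩) hnW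
      · exact hinj ha hc hac
    have hconn' : Conn (𝕜 := 𝕜) f (insert n s) := by
      intro S T hSs hTs hSne hTne hdisj hunion
      have hnST : n ∈ S ∪ T := by rw [hunion]; exact Finset.mem_insert_self n s
      have herase : ∀ X : Finset (Fin N), X ⊆ insert n s → X.erase n ⊆ s := by
        intro X hX x hx
        have hxX := Finset.mem_of_mem_erase hx
        have hxn := Finset.ne_of_mem_erase hx
        rcases Finset.mem_insert.mp (hX hxX) with h | h
        · exact absurd h hxn
        · exact h
      rcases Finset.mem_union.mp hnST with hnS | hnT
      · have hTn : n ∉ T := fun h => (Finset.disjoint_left.mp hdisj hnS) h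
        have hTsub : T ⊆ s := by
          intro x hx
          rcases Finset.mem_insert.mp (hTs hx) with rfl | h
          · exact absurd hx hTn
          · exact h
        by_cases hSe : (S.erase n).Nonempty
        · have hun : S.erase n ∪ T = s := by
            ext x
            constructor
            · intro hx
              rcases Finset.mem_union.mp hx with h | h
              · exact herase S hSs h
              · exact hTsub h
            · intro hx
              have hxn : x ≠ n := fun h => hns (h ▸ hx)
              have : x ∈ S ∪ T := by rw [hunion]; exact Finset.mem_insert_of_mem hx
              rcases Finset.mem_union.mp this with h | h
              · exact Finset.mem_union_left _ (Finset.mem_erase.mpr ⟨hxn, h⟩)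
              · exact Finset.mem_union_right _ h
          obtain ⟨a, ha, c, hc, h0⟩ := hconn (S.erase n) T (herase S hSs) hTsub hSe hTne
            (Finset.disjoint_of_subset_left (Finset.erase_subset n S) hdisj) hun
          exact ⟨a, Finset.mem_of_mem_erase ha, c, hc, h0⟩
        · rw [Finset.not_nonempty_iff_eq_empty] at hSe
          have hSeq : S = {n} := by
            ext x
            simp only [Finset.mem_singleton]
            constructor
            · intro hx
              by_contra hxn
              exact absurd (Finset.mem_erase.mpr ⟨hxn, hx⟩) (by rw [hSe]; exact Finset.notMem_empty x)
            · rintro rfl; exact hnS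
          have hTeq : T = s := by
            ext x
            constructor
            · exact fun hx => hTsub hx
            · intro hx
              have hxn : x ≠ n := fun h => hns (h ▸ hx)
              have : x ∈ S ∪ T := by rw [hunion]; exact Finset.mem_insert_of_mem hx
              rcases Finset.mem_union.mp this with h | h
              · exact absurd (hSeq ▸ h) (by simpa using hxn)
              · exact h
          refine ⟨n, hnS, b, hTeq ▸ hbs, fun h => hbn ?_⟩
          rwa [inner_eq_zero_symm] at h
      · have hSn : n ∉ S := fun h => (Finset.disjoint_left.mp hdisj h) hnT
        have hSsub : S ⊆ s := by
          intro x hx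
          rcases Finset.mem_insert.mp (hSs hx) with rfl | h
          · exact absurd hx hSn
          · exact h
        by_cases hTe : (T.erase n).Nonempty
        · have hun : S ∪ T.erase n = s := by
            ext x
            constructor
            · intro hx
              rcases Finset.mem_union.mp hx with h | h
              · exact hSsub h
              · exact herase T hTs h
            · intro hx
              have hxn : x ≠ n := fun h => hns (h ▸ hx)
              have : x ∈ S ∪ T := by rw [hunion]; exact Finset.mem_insert_of_mem hx
              rcases Finset.mem_union.mp this with h | h
              · exact Finset.mem_union_left _ h
              · exact Finset.mem_union_right _ (Finset.mem_erase.mpr ⟨hxn, h⟩)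
          obtain ⟨a, ha, c, hc, h0⟩ := hconn S (T.erase n) hSsub (herase T hTs) hSne hTe
            (Finset.disjoint_of_subset_right (Finset.erase_subset n T) hdisj) hun
          exact ⟨a, ha, c, Finset.mem_of_mem_erase hc, h0⟩
        · rw [Finset.not_nonempty_iff_eq_empty] at hTe
          have hSeq : S = s := by
            ext x
            constructor
            · exact fun hx => hSsub hx
            · intro hx
              have hxn : x ≠ n := fun h => hns (h ▸ hx)
              have : x ∈ S ∪ T := by rw [hunion]; exact Finset.mem_insert_of_mem hx
              rcases Finset.mem_union.mp this with h | h
              · exact h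
              · exfalso
                exact absurd (Finset.mem_erase.mpr ⟨hxn, h⟩)
                  (by rw [hTe]; exact Finset.notMem_empty x)
          exact ⟨b, hSeq ▸ hbs, n, hnT, hbn⟩
    have hcard' : (insert n s).card + k = d := by
      rw [Finset.card_insert_of_notMem hns]; omega
    exact ih (insert n s) ⟨n, Finset.mem_insert_self n s⟩ hLI' hinj' hconn' hcard'

end Aux

/-- Every non-orthodecomposable FUNTF can be reordered so that its first `d` vectors form a
non-orthodecomposable basis of `𝕜^d`. -/
theorem nod_reorder_nod_basis (𝕜 : Type*) [RCLike 𝕜] (N d : ℕ) (hdN : d ≤ N)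
    (F : Matrix (Fin d) (Fin N) 𝕜) (hF : F ∈ FUNTF 𝕜 N d)
    (hNOD : ¬ Orthodecomposable 𝕜 (col F)) :
    ∃ σ : Equiv.Perm (Fin N),
      LinearIndependent 𝕜 (fun i : Fin d => col F (σ (Fin.castLE hdN i))) ∧
      Submodule.span 𝕜 (Set.range fun i : Fin d => col F (σ (Fin.castLE hdN i))) = ⊤ ∧
      ¬ Orthodecomposable 𝕜 (fun i : Fin d => col F (σ (Fin.castLE hdN i))) := by
  classical
  rcases Nat.eq_zero_or_pos d with hd0 | hd
  · subst hd0
    refine ⟨1, linearIndependent_empty_type, ?_, ?_⟩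
    · rw [Submodule.eq_top_iff']
      intro x
      have hx : x = 0 := by ext i; exact i.elim0
      rw [hx]; exact zero_mem _
    · rintro ⟨S, T, ⟨i, _⟩, _⟩
      exact i.elim0
  · set f := col F with hf
    have hinner : ∀ a b : Fin N, (inner 𝕜 (f a) (f b) : 𝕜) = (F.conjTranspose * F) a b := by
      intro a b
      simp [hf, col, PiLp.inner_apply, Matrix.mul_apply, Matrix.conjTranspose_apply,
        RCLike.inner_apply, mul_comm]
    have hf0 : ∀ n, f n ≠ 0 := by
      intro n h
      have h1 : (inner 𝕜 (f n) (f n) : 𝕜) = 1 := by rw [hinner]; exact hF.2 n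
      rw [h, inner_zero_left] at h1
      exact zero_ne_one h1
    have hspan : span 𝕜 (Set.range f) = ⊤ := by
      rw [← Submodule.orthogonal_eq_bot_iff, eq_bot_iff]
      intro x hx
      rw [Submodule.mem_bot]
      have hx0 : ∀ n : Fin N, (inner 𝕜 (f n) x : 𝕜) = 0 := fun n =>
        (Submodule.mem_orthogonal _ _).1 hx (f n) (subset_span ⟨n, rfl⟩)
      set y : Fin d → 𝕜 := fun i => x i with hy
      have h1 : F.conjTranspose.mulVec y = 0 := by
        funext n
        have : F.conjTranspose.mulVec y n = (inner 𝕜 (f n) x : 𝕜) := by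
          simp [hf, col, Matrix.mulVec, dotProduct, Matrix.conjTranspose_apply,
            PiLp.inner_apply, RCLike.inner_apply, hy, mul_comm]
        rw [this, hx0]
        rfl
      have h2 : ((N : 𝕜) / (d : 𝕜)) • y = 0 := by
        have h3 := congrArg (fun M : Matrix (Fin d) (Fin d) 𝕜 => M.mulVec y) hF.1
        simp only [Matrix.smul_mulVec, Matrix.one_mulVec] at h3
        rw [← Matrix.mulVec_mulVec, h1, Matrix.mulVec_zero] at h3
        exact h3.symm
      have hc : ((N : 𝕜) / (d : 𝕜)) ≠ 0 := by
        apply div_ne_zero <;> [skip; skip] <;>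
          exact Nat.cast_ne_zero.mpr (by omega)
      have hy0 : y = 0 := by
        rcases smul_eq_zero.mp h2 with h | h
        · exact absurd h hc
        · exact h
      ext i
      exact congrFun hy0 i
    haveI : Nonempty (Fin d) := ⟨⟨0, hd⟩⟩
    have hN : 0 < N := lt_of_lt_of_le hd hdN
    set n₀ : Fin N := ⟨0, hN⟩ with hn₀
    have hsLI : LinearIndependent 𝕜
        (fun x : (f '' (({n₀} : Finset (Fin N)) : Set (Fin N))) => (x : EuclideanSpace 𝕜 (Fin d))) := by
      have h1 : f '' (({n₀} : Finset (Fin N)) : Set (Fin N)) = {f n₀} := by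
        rw [Finset.coe_singleton, Set.image_singleton]
      rw [h1]
      exact LinearIndepOn.singleton (v := id) (hf0 n₀)
    have hsinj : Set.InjOn f (({n₀} : Finset (Fin N)) : Set (Fin N)) := by
      intro a ha c hc _
      simp only [Finset.coe_singleton, Set.mem_singleton_iff] at ha hc
      rw [ha, hc]
    have hsconn : Conn (𝕜 := 𝕜) f ({n₀} : Finset (Fin N)) := by
      intro S T hS hT ⟨a, haS⟩ ⟨b, hbT⟩ hdisj _
      exfalso
      have ha : a = n₀ := Finset.mem_singleton.mp (hS haS)
      have hb : b = n₀ := Finset.mem_singleton.mp (hT hbT)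
      exact Finset.disjoint_left.mp hdisj haS (ha ▸ hb ▸ hbT)
    obtain ⟨t, htcard, htLI, htinj, htconn⟩ := exists_extend f hspan hNOD (d - 1)
      {n₀} ⟨n₀, Finset.mem_singleton_self n₀⟩ hsLI hsinj hsconn
      (by rw [Finset.card_singleton]; omega)
    set e' : Fin d ≃ ↥t := (Finset.equivFinOfCardEq htcard).symm with he'
    let a : Fin d ≃ {x : Fin N // (x : ℕ) < d} :=
      { toFun := fun i => ⟨Fin.castLE hdN i, i.isLt⟩
        invFun := fun x => ⟨(x : Fin N), x.2⟩
        left_inv := fun i => rfl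
        right_inv := fun x => rfl }
    set e2 : {x : Fin N // (x : ℕ) < d} ≃ {x // x ∈ t} := a.symm.trans e' with he2
    set σ : Equiv.Perm (Fin N) := e2.extendSubtype with hσdef
    have hσ : ∀ i : Fin d, σ (Fin.castLE hdN i) = (e' i : Fin N) := by
      intro i
      rw [hσdef, Equiv.extendSubtype_apply_of_mem e2 _ i.isLt]
      rfl
    set g : Fin d → EuclideanSpace 𝕜 (Fin d) := fun i => f (e' i : Fin N) with hg
    have hbij : Set.BijOn f (↑t) (f '' ↑t) := htinj.bijOn_image
    have hLIt : LinearIndependent 𝕜 (fun x : (↑t : Set (Fin N)) => f x) :=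
      htLI.comp (Set.BijOn.equiv f hbij) (Set.BijOn.equiv f hbij).injective
    have hLIg : LinearIndependent 𝕜 g := hLIt.comp (e' : Fin d → ↥t) e'.injective
    have hspang : span 𝕜 (Set.range g) = ⊤ :=
      hLIg.span_eq_top_of_card_eq_finrank
        (by rw [Fintype.card_fin, finrank_euclideanSpace_fin])
    have hnodg : ¬ Orthodecomposable 𝕜 g := by
      rintro ⟨S, T, hSne, hTne, hdisj, hunion, hspan_eq⟩
      set SS := (S.toFinite.toFinset).image (fun i => (e' i : Fin N)) with hSS
      set TT := (T.toFinite.toFinset).image (fun i => (e' i : Fin N)) with hTT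
      have hmemSS : ∀ i, i ∈ S → (e' i : Fin N) ∈ SS := fun i hi =>
        Finset.mem_image_of_mem _ ((Set.Finite.mem_toFinset _).2 hi)
      have hmemTT : ∀ i, i ∈ T → (e' i : Fin N) ∈ TT := fun i hi =>
        Finset.mem_image_of_mem _ ((Set.Finite.mem_toFinset _).2 hi)
      have hecoe : Function.Injective (fun i : Fin d => (e' i : Fin N)) :=
        Subtype.val_injective.comp e'.injective
      obtain ⟨x, hxSS, z, hzTT, hxz⟩ := htconn SS TT
        (by rintro x hx
            obtain ⟨i, _, rfl⟩ := Finset.mem_image.mp hx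
            exact (e' i).2)
        (by rintro x hx
            obtain ⟨i, _, rfl⟩ := Finset.mem_image.mp hx
            exact (e' i).2)
        (by obtain ⟨i, hi⟩ := hSne; exact ⟨_, hmemSS i hi⟩)
        (by obtain ⟨i, hi⟩ := hTne; exact ⟨_, hmemTT i hi⟩)
        (by rw [Finset.disjoint_left]
            rintro x hx hx'
            obtain ⟨i, hi, rfl⟩ := Finset.mem_image.mp hx
            obtain ⟨j, hj, hji⟩ := Finset.mem_image.mp hx'
            rw [Set.Finite.mem_toFinset] at hi hj
            have : j = i := hecoe hji
            exact Set.disjoint_left.mp hdisj hi (this ▸ hj))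
        (by ext x
            constructor
            · intro hx
              rcases Finset.mem_union.mp hx with h | h
              · obtain ⟨i, _, rfl⟩ := Finset.mem_image.mp h
                exact (e' i).2
              · obtain ⟨i, _, rfl⟩ := Finset.mem_image.mp h
                exact (e' i).2
            · intro hx
              have hxe : x = (e' (e'.symm ⟨x, hx⟩) : Fin N) := by rw [Equiv.apply_symm_apply]
              have : e'.symm ⟨x, hx⟩ ∈ S ∪ T := by rw [hunion]; exact Set.mem_univ _
              rcases this with h | h
              · exact Finset.mem_union_left _ (hxe ▸ hmemSS _ h)
              · exact Finset.mem_union_right _ (hxe ▸ hmemTT _ h))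
      obtain ⟨i, hiS, rfl⟩ := Finset.mem_image.mp hxSS
      obtain ⟨j, hjT, rfl⟩ := Finset.mem_image.mp hzTT
      rw [Set.Finite.mem_toFinset] at hiS hjT
      apply hxz
      have h1 : g i ∈ (span 𝕜 (g '' T))ᗮ :=
        hspan_eq ▸ subset_span (Set.mem_image_of_mem g hiS)
      have h2 : g j ∈ span 𝕜 (g '' T) := subset_span (Set.mem_image_of_mem g hjT)
      have h3 : (inner 𝕜 (g j) (g i) : 𝕜) = 0 :=
        Submodule.inner_right_of_mem_orthogonal h2 h1
      rw [inner_eq_zero_symm] at h3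
      exact h3
    have hfun : (fun i : Fin d => col F (σ (Fin.castLE hdN i))) = g := by
      funext i
      rw [hσ i]
    refine ⟨σ, ?_, ?_, ?_⟩
    · rw [hfun]; exact hLIg
    · rw [hfun]; exact hspang
    · rw [hfun]; exact hnodg
end
end

section
/- Let 𝔽 = ℝ or ℂ and let N > d ≥ 1. Then the set of non-orthodecomposable frames in 𝓕_{N,d}^𝔽 is dense in 𝓕_{N,d}^𝔽 with respect to the standard topology: every orthodecomposable FUNTF is the limit of a sequence of non-orthodecomposable FUNTFs. -/
noncomputable section

namespace NODaux

open Matrix Finset Filter Topology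

variable {𝕜 : Type*} [RCLike 𝕜] {N d : ℕ}

/-! ### Basic facts -/

lemma inner_col (F : Matrix (Fin d) (Fin N) 𝕜) (i j : Fin N) :
    (inner 𝕜 (_root_.col F i) (_root_.col F j)) = (F.conjTranspose * F) i j := by
  simp [_root_.col, PiLp.inner_apply, Matrix.mul_apply,
    Matrix.conjTranspose_apply, RCLike.inner_apply, mul_comm]

/-- If a frame is OD via `(S, T)`, all cross Gram entries vanish. -/
lemma cross_zero {F : Matrix (Fin d) (Fin N) 𝕜} {S T : Set (Fin N)}
    (hspan : Submodule.span 𝕜 (_root_.col F '' S) = (Submodule.span 𝕜 (_root_.col F '' T))ᗮ)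
    {u v : Fin N} (hu : u ∈ S) (hv : v ∈ T) :
    (F.conjTranspose * F) u v = 0 ∧ (F.conjTranspose * F) v u = 0 := by
  have hmem : _root_.col F u ∈ (Submodule.span 𝕜 (_root_.col F '' T))ᗮ := by
    rw [← hspan]
    exact Submodule.subset_span (Set.mem_image_of_mem _ hu)
  have hmemT : _root_.col F v ∈ Submodule.span 𝕜 (_root_.col F '' T) :=
    Submodule.subset_span (Set.mem_image_of_mem _ hv)
  have h1 : (inner 𝕜 (_root_.col F v) (_root_.col F u)) = 0 :=
    (Submodule.mem_orthogonal _ _).mp hmem _ hmemT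
  have h2 : (inner 𝕜 (_root_.col F u) (_root_.col F v)) = 0 := inner_eq_zero_symm.mp h1
  rw [inner_col] at h1 h2
  exact ⟨h2, h1⟩

/-- In a FUNTF with `N > d`, every vector has a "neighbor". -/
lemma exists_neighbor {F : Matrix (Fin d) (Fin N) 𝕜} (hF : F ∈ FUNTF 𝕜 N d)
    (hd : 1 ≤ d) (hdN : d < N) (b : Fin N) :
    ∃ g, g ≠ b ∧ (F.conjTranspose * F) g b ≠ 0 := by
  by_contra hcon
  push_neg at hcon
  have hdne : ((d : 𝕜)) ≠ 0 := Nat.cast_ne_zero.mpr (by omega)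
  have hr : ((N : 𝕜) / (d : 𝕜)) ≠ 1 := by
    intro hEq
    rw [div_eq_one_iff_eq hdne] at hEq
    exact absurd (Nat.cast_injective hEq) (by omega)
  have key : ∀ i, F i b = ((N : 𝕜) / (d : 𝕜)) * F i b := by
    intro i
    have h2 : (F * (F.conjTranspose * F)) i b = ((N : 𝕜) / (d : 𝕜)) * F i b := by
      rw [← Matrix.mul_assoc, hF.1, Matrix.smul_mul, Matrix.one_mul, Matrix.smul_apply,
        smul_eq_mul]
    have h3 : (F * (F.conjTranspose * F)) i b = F i b := by
      rw [Matrix.mul_apply, Finset.sum_eq_single b]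
      · rw [hF.2 b, mul_one]
      · intro k _ hk
        rw [hcon k hk, mul_zero]
      · simp
    rw [← h2]
    exact h3.symm
  have hzero : ∀ i, F i b = 0 := by
    intro i
    have h4 : (((N : 𝕜) / (d : 𝕜)) - 1) * F i b = 0 := by
      have := key i
      ring_nf
      linear_combination -this
    exact (mul_eq_zero.mp h4).resolve_left (sub_ne_zero.mpr hr)
  have hb := hF.2 b
  rw [Matrix.mul_apply] at hb
  simp only [Matrix.conjTranspose_apply, hzero, mul_zero, Finset.sum_const_zero] at hb
  exact zero_ne_one hb

/-! ### The rotation move -/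

/-- Rotate columns `a` and `b` of `F` by angle `t`. -/
def rot (F : Matrix (Fin d) (Fin N) 𝕜) (a b : Fin N) (t : ℝ) : Matrix (Fin d) (Fin N) 𝕜 :=
  Matrix.of fun i k =>
    if k = a then ((Real.cos t : ℝ) : 𝕜) * F i a + ((Real.sin t : ℝ) : 𝕜) * F i b
    else if k = b then -((Real.sin t : ℝ) : 𝕜) * F i a + ((Real.cos t : ℝ) : 𝕜) * F i b
    else F i k

lemma rot_apply_a (F : Matrix (Fin d) (Fin N) 𝕜) (a b : Fin N) (t : ℝ) (i : Fin d) :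
    rot F a b t i a = ((Real.cos t : ℝ) : 𝕜) * F i a + ((Real.sin t : ℝ) : 𝕜) * F i b := by
  simp [rot]

lemma rot_apply_b (F : Matrix (Fin d) (Fin N) 𝕜) {a b : Fin N} (hba : b ≠ a) (t : ℝ) (i : Fin d) :
    rot F a b t i b = -((Real.sin t : ℝ) : 𝕜) * F i a + ((Real.cos t : ℝ) : 𝕜) * F i b := by
  simp [rot, hba]

lemma rot_apply_ne (F : Matrix (Fin d) (Fin N) 𝕜) {a b k : Fin N} (hka : k ≠ a) (hkb : k ≠ b)
    (t : ℝ) (i : Fin d) : rot F a b t i k = F i k := by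
  simp [rot, hka, hkb]

lemma hcs (t : ℝ) :
    ((Real.cos t : ℝ) : 𝕜) * ((Real.cos t : ℝ) : 𝕜) +
      ((Real.sin t : ℝ) : 𝕜) * ((Real.sin t : ℝ) : 𝕜) = 1 := by
  have h := Real.sin_sq_add_cos_sq t
  have h2 : ((Real.sin t * Real.sin t + Real.cos t * Real.cos t : ℝ) : 𝕜) = ((1 : ℝ) : 𝕜) := by
    rw [show Real.sin t * Real.sin t + Real.cos t * Real.cos t = 1 by nlinarith [h]]
  push_cast at h2
  linear_combination h2

lemma sum_pair_congr {M : Type*} [AddCommMonoid M] {a b : Fin N} (hab : a ≠ b)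
    {f g : Fin N → M} (h : ∀ k, k ≠ a → k ≠ b → f k = g k)
    (hsum : f a + f b = g a + g b) : ∑ k, f k = ∑ k, g k := by
  classical
  have ha : a ∈ (Finset.univ : Finset (Fin N)) := Finset.mem_univ a
  rw [← Finset.add_sum_erase _ f ha, ← Finset.add_sum_erase _ g ha]
  have hb : b ∈ (Finset.univ : Finset (Fin N)).erase a := by
    simp [Finset.mem_erase, hab.symm]
  rw [← Finset.add_sum_erase _ f hb, ← Finset.add_sum_erase _ g hb]
  have hS : ∑ k ∈ ((Finset.univ : Finset (Fin N)).erase a).erase b, f k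
      = ∑ k ∈ ((Finset.univ : Finset (Fin N)).erase a).erase b, g k := by
    refine Finset.sum_congr rfl fun k hk => ?_
    rw [Finset.mem_erase, Finset.mem_erase] at hk
    exact h k hk.2.1 hk.1
  rw [hS, ← add_assoc, ← add_assoc, hsum]

lemma rot_mul_conjT (F : Matrix (Fin d) (Fin N) 𝕜) {a b : Fin N} (hab : a ≠ b) (t : ℝ) :
    rot F a b t * (rot F a b t).conjTranspose = F * F.conjTranspose := by
  ext i j
  simp only [Matrix.mul_apply, Matrix.conjTranspose_apply]
  refine sum_pair_congr hab (fun k hka hkb => by simp only [rot_apply_ne F hka hkb]) ?_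
  rw [rot_apply_a, rot_apply_a, rot_apply_b F hab.symm, rot_apply_b F hab.symm]
  simp only [RCLike.star_def, map_add, _root_.map_mul, map_neg, RCLike.conj_ofReal]
  linear_combination (F i a * (starRingEnd 𝕜) (F j a) + F i b * (starRingEnd 𝕜) (F j b)) *
    hcs (𝕜 := 𝕜) t

section gramRot

variable (F : Matrix (Fin d) (Fin N) 𝕜) {a b : Fin N} (t : ℝ)

lemma gramRot_other {k l : Fin N} (hka : k ≠ a) (hkb : k ≠ b) (hla : l ≠ a) (hlb : l ≠ b) :
    ((rot F a b t).conjTranspose * rot F a b t) k l = (F.conjTranspose * F) k l := by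
  simp only [Matrix.mul_apply, Matrix.conjTranspose_apply, rot_apply_ne F hka hkb,
    rot_apply_ne F hla hlb]

lemma gramRot_col_a {k : Fin N} (hka : k ≠ a) (hkb : k ≠ b) :
    ((rot F a b t).conjTranspose * rot F a b t) k a
      = ((Real.cos t : ℝ) : 𝕜) * (F.conjTranspose * F) k a
        + ((Real.sin t : ℝ) : 𝕜) * (F.conjTranspose * F) k b := by
  simp only [Matrix.mul_apply, Matrix.conjTranspose_apply, rot_apply_ne F hka hkb,
    rot_apply_a]
  rw [Finset.mul_sum, Finset.mul_sum, ← Finset.sum_add_distrib]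
  refine Finset.sum_congr rfl fun i _ => ?_
  ring

lemma gramRot_col_b (hba : b ≠ a) {k : Fin N} (hka : k ≠ a) (hkb : k ≠ b) :
    ((rot F a b t).conjTranspose * rot F a b t) k b
      = -((Real.sin t : ℝ) : 𝕜) * (F.conjTranspose * F) k a
        + ((Real.cos t : ℝ) : 𝕜) * (F.conjTranspose * F) k b := by
  simp only [Matrix.mul_apply, Matrix.conjTranspose_apply, rot_apply_ne F hka hkb,
    rot_apply_b F hba]
  rw [Finset.mul_sum, Finset.mul_sum, ← Finset.sum_add_distrib]
  refine Finset.sum_congr rfl fun i _ => ?_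
  ring

lemma gramRot_row_a {l : Fin N} (hla : l ≠ a) (hlb : l ≠ b) :
    ((rot F a b t).conjTranspose * rot F a b t) a l
      = ((Real.cos t : ℝ) : 𝕜) * (F.conjTranspose * F) a l
        + ((Real.sin t : ℝ) : 𝕜) * (F.conjTranspose * F) b l := by
  simp only [Matrix.mul_apply, Matrix.conjTranspose_apply, rot_apply_ne F hla hlb,
    rot_apply_a, RCLike.star_def, map_add, _root_.map_mul, RCLike.conj_ofReal]
  rw [Finset.mul_sum, Finset.mul_sum, ← Finset.sum_add_distrib]
  refine Finset.sum_congr rfl fun i _ => ?_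
  ring

lemma gramRot_row_b (hba : b ≠ a) {l : Fin N} (hla : l ≠ a) (hlb : l ≠ b) :
    ((rot F a b t).conjTranspose * rot F a b t) b l
      = -((Real.sin t : ℝ) : 𝕜) * (F.conjTranspose * F) a l
        + ((Real.cos t : ℝ) : 𝕜) * (F.conjTranspose * F) b l := by
  simp only [Matrix.mul_apply, Matrix.conjTranspose_apply, rot_apply_ne F hla hlb,
    rot_apply_b F hba, RCLike.star_def, map_add, _root_.map_mul, map_neg, RCLike.conj_ofReal]
  rw [Finset.mul_sum, Finset.mul_sum, ← Finset.sum_add_distrib]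
  refine Finset.sum_congr rfl fun i _ => ?_
  ring

lemma gramRot_aa :
    ((rot F a b t).conjTranspose * rot F a b t) a a
      = ((Real.cos t : ℝ) : 𝕜) * ((Real.cos t : ℝ) : 𝕜) * (F.conjTranspose * F) a a
        + ((Real.cos t : ℝ) : 𝕜) * ((Real.sin t : ℝ) : 𝕜) * (F.conjTranspose * F) a b
        + ((Real.sin t : ℝ) : 𝕜) * ((Real.cos t : ℝ) : 𝕜) * (F.conjTranspose * F) b a
        + ((Real.sin t : ℝ) : 𝕜) * ((Real.sin t : ℝ) : 𝕜) * (F.conjTranspose * F) b b := by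
  simp only [Matrix.mul_apply, Matrix.conjTranspose_apply, rot_apply_a, RCLike.star_def,
    map_add, _root_.map_mul, RCLike.conj_ofReal]
  rw [Finset.mul_sum, Finset.mul_sum, Finset.mul_sum, Finset.mul_sum,
    ← Finset.sum_add_distrib, ← Finset.sum_add_distrib, ← Finset.sum_add_distrib]
  refine Finset.sum_congr rfl fun i _ => ?_
  ring

lemma gramRot_bb (hba : b ≠ a) :
    ((rot F a b t).conjTranspose * rot F a b t) b b
      = ((Real.sin t : ℝ) : 𝕜) * ((Real.sin t : ℝ) : 𝕜) * (F.conjTranspose * F) a a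
        + (-(((Real.sin t : ℝ) : 𝕜) * ((Real.cos t : ℝ) : 𝕜))) * (F.conjTranspose * F) a b
        + (-(((Real.cos t : ℝ) : 𝕜) * ((Real.sin t : ℝ) : 𝕜))) * (F.conjTranspose * F) b a
        + ((Real.cos t : ℝ) : 𝕜) * ((Real.cos t : ℝ) : 𝕜) * (F.conjTranspose * F) b b := by
  simp only [Matrix.mul_apply, Matrix.conjTranspose_apply, rot_apply_b F hba, RCLike.star_def,
    map_add, _root_.map_mul, map_neg, RCLike.conj_ofReal]
  rw [Finset.mul_sum, Finset.mul_sum, Finset.mul_sum, Finset.mul_sum,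
    ← Finset.sum_add_distrib, ← Finset.sum_add_distrib, ← Finset.sum_add_distrib]
  refine Finset.sum_congr rfl fun i _ => ?_
  ring

lemma gramRot_ab (hba : b ≠ a) :
    ((rot F a b t).conjTranspose * rot F a b t) a b
      = (-(((Real.cos t : ℝ) : 𝕜) * ((Real.sin t : ℝ) : 𝕜))) * (F.conjTranspose * F) a a
        + ((Real.cos t : ℝ) : 𝕜) * ((Real.cos t : ℝ) : 𝕜) * (F.conjTranspose * F) a b
        + (-(((Real.sin t : ℝ) : 𝕜) * ((Real.sin t : ℝ) : 𝕜))) * (F.conjTranspose * F) b a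
        + ((Real.sin t : ℝ) : 𝕜) * ((Real.cos t : ℝ) : 𝕜) * (F.conjTranspose * F) b b := by
  simp only [Matrix.mul_apply, Matrix.conjTranspose_apply, rot_apply_a, rot_apply_b F hba,
    RCLike.star_def, map_add, _root_.map_mul, map_neg, RCLike.conj_ofReal]
  rw [Finset.mul_sum, Finset.mul_sum, Finset.mul_sum, Finset.mul_sum,
    ← Finset.sum_add_distrib, ← Finset.sum_add_distrib, ← Finset.sum_add_distrib]
  refine Finset.sum_congr rfl fun i _ => ?_
  ring

lemma gramRot_ba (hba : b ≠ a) :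
    ((rot F a b t).conjTranspose * rot F a b t) b a
      = (-(((Real.sin t : ℝ) : 𝕜) * ((Real.cos t : ℝ) : 𝕜))) * (F.conjTranspose * F) a a
        + (-(((Real.sin t : ℝ) : 𝕜) * ((Real.sin t : ℝ) : 𝕜))) * (F.conjTranspose * F) a b
        + ((Real.cos t : ℝ) : 𝕜) * ((Real.cos t : ℝ) : 𝕜) * (F.conjTranspose * F) b a
        + ((Real.cos t : ℝ) : 𝕜) * ((Real.sin t : ℝ) : 𝕜) * (F.conjTranspose * F) b b := by
  simp only [Matrix.mul_apply, Matrix.conjTranspose_apply, rot_apply_a, rot_apply_b F hba,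
    RCLike.star_def, map_add, _root_.map_mul, map_neg, RCLike.conj_ofReal]
  rw [Finset.mul_sum, Finset.mul_sum, Finset.mul_sum, Finset.mul_sum,
    ← Finset.sum_add_distrib, ← Finset.sum_add_distrib, ← Finset.sum_add_distrib]
  refine Finset.sum_congr rfl fun i _ => ?_
  ring

end gramRot

/-! ### Limits and eventual genericity -/

lemma coecos : Filter.Tendsto (fun t : ℝ => ((Real.cos t : ℝ) : 𝕜)) (𝓝 0) (𝓝 (1:𝕜)) := by
  have h := Real.continuous_cos.tendsto 0
  rw [Real.cos_zero] at h
  simpa [Function.comp_def] using ((RCLike.continuous_ofReal (K := 𝕜)).tendsto (1:ℝ)).comp h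

lemma coesin : Filter.Tendsto (fun t : ℝ => ((Real.sin t : ℝ) : 𝕜)) (𝓝 0) (𝓝 (0:𝕜)) := by
  have h := Real.continuous_sin.tendsto 0
  rw [Real.sin_zero] at h
  simpa [Function.comp_def] using ((RCLike.continuous_ofReal (K := 𝕜)).tendsto (0:ℝ)).comp h

lemma tendsto_lin1 (x y : 𝕜) :
    Filter.Tendsto (fun t : ℝ => ((Real.cos t : ℝ) : 𝕜) * x + ((Real.sin t : ℝ) : 𝕜) * y)
      (𝓝 0) (𝓝 x) := by
  simpa using (coecos.mul (tendsto_const_nhds (x := x))).add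
    (coesin.mul (tendsto_const_nhds (x := y)))

lemma tendsto_lin2 (x y : 𝕜) :
    Filter.Tendsto (fun t : ℝ => -((Real.sin t : ℝ) : 𝕜) * x + ((Real.cos t : ℝ) : 𝕜) * y)
      (𝓝 0) (𝓝 y) := by
  simpa using (coesin.neg.mul (tendsto_const_nhds (x := x))).add
    (coecos.mul (tendsto_const_nhds (x := y)))

lemma ev_lin1 (x y : 𝕜) : ∀ᶠ t in 𝓝[>] (0:ℝ),
    x ≠ 0 → ((Real.cos t : ℝ) : 𝕜) * x + ((Real.sin t : ℝ) : 𝕜) * y ≠ 0 := by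
  by_cases hx : x = 0
  · exact Filter.Eventually.of_forall fun t h => absurd hx h
  · exact (((tendsto_lin1 x y).mono_left nhdsWithin_le_nhds).eventually_ne hx).mono
      fun t ht _ => ht

lemma ev_lin2 (x y : 𝕜) : ∀ᶠ t in 𝓝[>] (0:ℝ),
    y ≠ 0 → -((Real.sin t : ℝ) : 𝕜) * x + ((Real.cos t : ℝ) : 𝕜) * y ≠ 0 := by
  by_cases hy : y = 0
  · exact Filter.Eventually.of_forall fun t h => absurd hy h
  · exact (((tendsto_lin2 x y).mono_left nhdsWithin_le_nhds).eventually_ne hy).mono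
      fun t ht _ => ht

lemma ev_sin : ∀ᶠ t in 𝓝[>] (0:ℝ), Real.sin t ≠ 0 := by
  have h : Set.Ioo (0:ℝ) Real.pi ∈ 𝓝[>] (0:ℝ) :=
    Ioo_mem_nhdsGT_of_mem ⟨le_refl 0, Real.pi_pos⟩
  filter_upwards [h] with t ht
  exact ne_of_gt (Real.sin_pos_of_pos_of_lt_pi ht.1 ht.2)

lemma rot_tendsto (F : Matrix (Fin d) (Fin N) 𝕜) (a b : Fin N) (hba : b ≠ a) :
    Filter.Tendsto (fun t => rot F a b t) (𝓝[>] (0:ℝ)) (𝓝 F) := by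
  apply Filter.Tendsto.mono_left _ nhdsWithin_le_nhds
  apply tendsto_pi_nhds.mpr
  intro i
  apply tendsto_pi_nhds.mpr
  intro k
  by_cases hka : k = a
  · rw [hka]
    simp only [rot_apply_a]
    exact tendsto_lin1 (F i a) (F i b)
  · by_cases hkb : k = b
    · rw [hkb]
      simp only [rot_apply_b F hba]
      exact tendsto_lin2 (F i a) (F i b)
    · simp only [rot_apply_ne F hka hkb]
      exact tendsto_const_nhds

/-! ### Zero-pair counting and the key move -/

/-- The set of ordered pairs of distinct indices with vanishing Gram entry. -/
def Zset (F : Matrix (Fin d) (Fin N) 𝕜) : Finset (Fin N × Fin N) :=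
  Finset.univ.filter fun p => p.1 ≠ p.2 ∧ (F.conjTranspose * F) p.1 p.2 = 0

lemma move {F : Matrix (Fin d) (Fin N) 𝕜} (hF : F ∈ FUNTF 𝕜 N d)
    (hd : 1 ≤ d) (hdN : d < N) (hOD : Orthodecomposable 𝕜 (_root_.col F)) :
    ∃ a b : Fin N, a ≠ b ∧ ∀ᶠ t in 𝓝[>] (0:ℝ),
      rot F a b t ∈ FUNTF 𝕜 N d ∧ (Zset (rot F a b t)).card < (Zset F).card := by
  obtain ⟨S, T, hS, hT, hdisj, hunion, hspan⟩ := hOD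
  obtain ⟨a, haS⟩ := hS
  obtain ⟨b, hbT⟩ := hT
  have hab : a ≠ b := fun h => (Set.disjoint_left.mp hdisj haS) (h ▸ hbT)
  have hGab : (F.conjTranspose * F) a b = 0 ∧ (F.conjTranspose * F) b a = 0 :=
    cross_zero hspan haS hbT
  obtain ⟨g, hgb, hgB⟩ := exists_neighbor hF hd hdN b
  have hgT : g ∈ T := by
    have : g ∈ S ∪ T := hunion ▸ Set.mem_univ g
    rcases this with hgS | hgT
    · exact absurd (cross_zero hspan hgS hbT).1 hgB
    · exact hgT
  have hga0 : (F.conjTranspose * F) g a = 0 := (cross_zero hspan haS hgT).2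
  have hgA : g ≠ a := fun h => (Set.disjoint_left.mp hdisj (h ▸ haS)) hgT
  refine ⟨a, b, hab, ?_⟩
  have EV1 : ∀ᶠ t in 𝓝[>] (0:ℝ), ∀ p : Fin N, (F.conjTranspose * F) p a ≠ 0 →
      ((Real.cos t : ℝ) : 𝕜) * (F.conjTranspose * F) p a
        + ((Real.sin t : ℝ) : 𝕜) * (F.conjTranspose * F) p b ≠ 0 :=
    Filter.eventually_all.mpr fun p => ev_lin1 _ _
  have EV2 : ∀ᶠ t in 𝓝[>] (0:ℝ), ∀ p : Fin N, (F.conjTranspose * F) p b ≠ 0 →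
      -((Real.sin t : ℝ) : 𝕜) * (F.conjTranspose * F) p a
        + ((Real.cos t : ℝ) : 𝕜) * (F.conjTranspose * F) p b ≠ 0 :=
    Filter.eventually_all.mpr fun p => ev_lin2 _ _
  have EV3 : ∀ᶠ t in 𝓝[>] (0:ℝ), ∀ p : Fin N, (F.conjTranspose * F) a p ≠ 0 →
      ((Real.cos t : ℝ) : 𝕜) * (F.conjTranspose * F) a p
        + ((Real.sin t : ℝ) : 𝕜) * (F.conjTranspose * F) b p ≠ 0 :=
    Filter.eventually_all.mpr fun p => ev_lin1 _ _
  have EV4 : ∀ᶠ t in 𝓝[>] (0:ℝ), ∀ p : Fin N, (F.conjTranspose * F) b p ≠ 0 →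
      -((Real.sin t : ℝ) : 𝕜) * (F.conjTranspose * F) a p
        + ((Real.cos t : ℝ) : 𝕜) * (F.conjTranspose * F) b p ≠ 0 :=
    Filter.eventually_all.mpr fun p => ev_lin2 _ _
  filter_upwards [EV1, EV2, EV3, EV4, ev_sin] with t h1 h2 h3 h4 hsin
  constructor
  · refine ⟨?_, ?_⟩
    · rw [rot_mul_conjT F hab]
      exact hF.1
    · intro n
      by_cases hna : n = a
      · rw [hna, gramRot_aa, hGab.1, hGab.2, hF.2 a, hF.2 b]
        linear_combination hcs (𝕜 := 𝕜) t
      · by_cases hnb : n = b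
        · rw [hnb, gramRot_bb F t hab.symm, hGab.1, hGab.2, hF.2 a, hF.2 b]
          linear_combination hcs (𝕜 := 𝕜) t
        · rw [gramRot_other F t hna hnb hna hnb]
          exact hF.2 n
  · have hsub : Zset (rot F a b t) ⊆ Zset F := by
      intro p hp
      obtain ⟨i, j⟩ := p
      simp only [Zset, Finset.mem_filter, Finset.mem_univ, true_and] at hp ⊢
      obtain ⟨hne, hz⟩ := hp
      refine ⟨hne, ?_⟩
      by_cases hia : i = a
      · by_cases hjb : j = b
        · rw [hia, hjb]
          exact hGab.1
        · have hja : j ≠ a := fun h => hne (hia.trans h.symm)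
          rw [hia] at hz ⊢
          rw [gramRot_row_a F t hja hjb] at hz
          by_contra hx
          exact (h3 j hx) hz
      · by_cases hib : i = b
        · by_cases hja : j = a
          · rw [hib, hja]
            exact hGab.2
          · have hjb : j ≠ b := fun h => hne (hib.trans h.symm)
            rw [hib] at hz ⊢
            rw [gramRot_row_b F t hab.symm hja hjb] at hz
            by_contra hx
            exact (h4 j hx) hz
        · by_cases hja : j = a
          · rw [hja] at hz ⊢
            rw [gramRot_col_a F t hia hib] at hz
            by_contra hx
            exact (h1 i hx) hz
          · by_cases hjb : j = b
            · rw [hjb] at hz ⊢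
              rw [gramRot_col_b F t hab.symm hia hib] at hz
              by_contra hx
              exact (h2 i hx) hz
            · rw [gramRot_other F t hia hib hja hjb] at hz
              exact hz
    have hmem : (g, a) ∈ Zset F := by
      simp only [Zset, Finset.mem_filter, Finset.mem_univ, true_and]
      exact ⟨hgA, hga0⟩
    have hnot : (g, a) ∉ Zset (rot F a b t) := by
      simp only [Zset, Finset.mem_filter, Finset.mem_univ, true_and, not_and]
      intro _
      rw [gramRot_col_a F t hgA hgb, hga0, mul_zero, zero_add]
      exact mul_ne_zero (RCLike.ofReal_ne_zero.mpr hsin) hgB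
    exact Finset.card_lt_card ((Finset.ssubset_iff_of_subset hsub).mpr ⟨(g, a), hmem, hnot⟩)

end NODaux

open NODaux Filter Topology in
/-- For `N > d ≥ 1`, the non-orthodecomposable frames are dense in `𝓕_{N,d}`:
every FUNTF (in particular every orthodecomposable one) lies in the closure of the set of
non-orthodecomposable FUNTFs. -/
theorem nod_dense (𝕜 : Type*) [RCLike 𝕜] (N d : ℕ) (hd : 1 ≤ d) (hdN : d < N) :
    FUNTF 𝕜 N d ⊆ closure {G ∈ FUNTF 𝕜 N d | ¬ Orthodecomposable 𝕜 (col G)} := by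
  intro F hF
  suffices H : ∀ k : ℕ, ∀ F : Matrix (Fin d) (Fin N) 𝕜, F ∈ FUNTF 𝕜 N d →
      (Zset F).card ≤ k → F ∈ closure {G ∈ FUNTF 𝕜 N d | ¬ Orthodecomposable 𝕜 (col G)} by
    exact H (Zset F).card F hF le_rfl
  intro k
  induction k using Nat.strong_induction_on with
  | _ k IH =>
    intro F hF hcard
    by_cases hOD : Orthodecomposable 𝕜 (col F)
    · obtain ⟨a, b, hab, hev⟩ := move hF hd hdN hOD
      have hclos : ∀ᶠ t in 𝓝[>] (0:ℝ),
          rot F a b t ∈ closure {G ∈ FUNTF 𝕜 N d | ¬ Orthodecomposable 𝕜 (col G)} := by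
        filter_upwards [hev] with t ht
        exact IH (Zset (rot F a b t)).card (lt_of_lt_of_le ht.2 hcard) _ ht.1 le_rfl
      have hcl := mem_closure_of_tendsto (rot_tendsto F a b hab.symm) hclos
      rwa [closure_closure] at hcl
    · exact subset_closure ⟨hF, hOD⟩
end
end
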